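/- Let $\mathbb{P} = (\mathbb{P}_n)_{n \ge 0}$ be a grand-canonical probability: $\mathbb{P}_0 \in [0,1]$, each $\mathbb{P}_n$ a finite symmetric nonnegative measure on $\Omega^n$ with $\mathbb{P}_0 + \sum_{n\ge 1} \mathbb{P}_n(\Omega^n) = 1$, and total density $\rho_{\mathbb{P}} = \sum_{n\ge 1} n \cdot (\text{first marginal of } \mathbb{P}_n)$ equal to a given finite measure $\rho$ on $\Omega$. Suppose $\rho$ is absolutely continuous with finite mass and let $\mathbb{G}_\rho$ be the Poisson state $\mathbb{G}_{\rho,n} = e^{-\rho(\Omega)} \rho^{\otimes n}/n!$. Then $\sum_{n \ge 0} \log(n!) \, \mathbb{P}_n(\Omega^n) \le \mathcal{H}(\mathbb{P}, \mathbb{G}_\rho) + \log 2 + \rho(\Omega)\log\rho(\Omega)$, where $\mathcal{H}(\mathbb{P},\mathbb{G}_\rho) = \sum_{n\ge 0} \int_{\Omega^n} \mathbb{P}_n \log(\mathbb{P}_n / \mathbb{G}_{\rho,n})$ is the grand-canonical relative entropy. -/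

import Mathlib

open MeasureTheory ENNReal

lemma dp_aux {α : Type*} [MeasurableSpace α] (μ ν : Measure α) [IsFiniteMeasure μ]
    [IsFiniteMeasure ν] (hμν : μ ≪ ν)
    (hμ0 : (μ Set.univ).toReal ≠ 0) (hν0 : (ν Set.univ).toReal ≠ 0)
    (hint : Integrable (fun x => Real.log ((μ.rnDeriv ν x).toReal)) μ) :
    (μ Set.univ).toReal * Real.log ((μ Set.univ).toReal / (ν Set.univ).toReal)
      ≤ ∫ x, Real.log ((μ.rnDeriv ν x).toReal) ∂μ := by
  set p := (μ Set.univ).toReal with hp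
  set g := (ν Set.univ).toReal with hg
  have hppos : 0 < p := lt_of_le_of_ne ENNReal.toReal_nonneg (Ne.symm hμ0)
  have hgpos : 0 < g := lt_of_le_of_ne ENNReal.toReal_nonneg (Ne.symm hν0)
  set c := p / g with hc
  have hcpos : 0 < c := div_pos hppos hgpos
  set f := μ.rnDeriv ν with hf
  have hfmeas : Measurable f := Measure.measurable_rnDeriv μ ν
  -- lintegral of inverse
  have hwd : ν.withDensity f = μ := Measure.withDensity_rnDeriv_eq μ ν hμν
  have hlint : ∫⁻ x, (f x)⁻¹ ∂μ ≤ ν Set.univ := by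
    rw [← hwd, lintegral_withDensity_eq_lintegral_mul _ hfmeas (g := fun x => (f x)⁻¹) hfmeas.inv]
    calc ∫⁻ x, (f * fun x => (f x)⁻¹) x ∂ν ≤ ∫⁻ _, 1 ∂ν := by
          apply lintegral_mono_ae
          filter_upwards [Measure.rnDeriv_ne_top μ ν] with x hx
          simp only [Pi.mul_apply]
          rcases eq_or_ne (f x) 0 with h0 | h0
          · simp [h0]
          · rw [ENNReal.mul_inv_cancel h0 hx]
      _ = ν Set.univ := lintegral_one
  have hlint' : ∫⁻ x, (f x)⁻¹ ∂μ ≠ ⊤ := (hlint.trans_lt (measure_lt_top ν _)).ne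
  have hint2 : Integrable (fun x => ((f x)⁻¹).toReal) μ :=
    integrable_toReal_of_lintegral_ne_top (hfmeas.inv.aemeasurable) hlint'
  have hpos : ∀ᵐ x ∂μ, 0 < f x := Measure.rnDeriv_pos hμν
  have hntop : ∀ᵐ x ∂μ, f x ≠ ⊤ := hμν.ae_le (Measure.rnDeriv_ne_top μ ν)
  have hih : ∫ x, ((f x)⁻¹).toReal ∂μ ≤ g := by
    rw [integral_toReal (f := fun x => (f x)⁻¹) hfmeas.inv.aemeasurable
      (by filter_upwards [hpos] with x hx; exact ENNReal.inv_lt_top.mpr hx)]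
    exact ENNReal.toReal_mono (measure_ne_top ν _) hlint
  -- pointwise bound
  have hptw : ∀ᵐ x ∂μ, Real.log c + 1 - c * ((f x)⁻¹).toReal ≤ Real.log ((f x).toReal) := by
    filter_upwards [hpos, hntop] with x hx1 hx2
    have ht : 0 < (f x).toReal := ENNReal.toReal_pos hx1.ne' hx2
    have h1 : Real.log (c / (f x).toReal) ≤ c / (f x).toReal - 1 :=
      Real.log_le_sub_one_of_pos (div_pos hcpos ht)
    rw [Real.log_div hcpos.ne' ht.ne'] at h1
    rw [ENNReal.toReal_inv]
    rw [div_eq_mul_inv] at h1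
    linarith
  have hmono := integral_mono_ae ((integrable_const (Real.log c + 1)).sub
    (hint2.const_mul c)) hint hptw
  simp only [Pi.sub_apply] at hmono
  rw [integral_sub (integrable_const _) (hint2.const_mul c), integral_const,
    MeasureTheory.integral_const_mul] at hmono
  have hcg : c * g = p := by rw [hc]; field_simp
  have h2 : c * ∫ x, ((f x)⁻¹).toReal ∂μ ≤ p := by
    rw [← hcg]; exact mul_le_mul_of_nonneg_left hih hcpos.le
  rw [smul_eq_mul, measureReal_def] at hmono
  have e : (μ Set.univ).toReal * (Real.log c + 1) = p * Real.log c + p := by rw [← hp]; ring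
  show p * Real.log c ≤ _
  linarith

/-- A grand-canonical probability with density `ρ`. -/
def IsGC {Ω : Type*} [MeasurableSpace Ω] (P : ∀ n : ℕ, Measure (Fin n → Ω))
    (ρ : Measure Ω) : Prop :=
  (∀ n, IsFiniteMeasure (P n)) ∧
  (∑' n, P n Set.univ) = 1 ∧
  (∀ (n : ℕ) (σ : Equiv.Perm (Fin n)), (P n).map (fun v => v ∘ σ) = P n) ∧
  (∀ B : Set Ω, MeasurableSet B →
    (∑' (n : ℕ), ((n : ℝ≥0∞) + 1) * P (n + 1) {v | v 0 ∈ B}) = ρ B)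

/-- Growth estimate in the particle number: for a grand-canonical probability `P` with
absolutely continuous density `ρ` and finite relative entropy `H` with respect to the
Poisson state `𝔾_ρ`, one has
`∑ log(n!) Pₙ(Ωⁿ) ≤ H(P,𝔾_ρ) + log 2 + ρ(Ω) log ρ(Ω)`. -/
theorem stmt6 (d : ℕ) (ρ : Measure (EuclideanSpace ℝ (Fin d))) [IsFiniteMeasure ρ]
    (hac : ρ ≪ (volume : Measure (EuclideanSpace ℝ (Fin d))))
    (P : ∀ n : ℕ, Measure (Fin n → EuclideanSpace ℝ (Fin d))) (hP : IsGC P ρ)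
    (G : ∀ n : ℕ, Measure (Fin n → EuclideanSpace ℝ (Fin d)))
    (hG : ∀ n : ℕ, G n = ENNReal.ofReal (Real.exp (-(ρ Set.univ).toReal) / n.factorial)
      • Measure.pi (fun _ : Fin n => ρ))
    (hPG : ∀ n, P n ≪ G n) (H : ℝ)
    (hint : ∀ n, Integrable
      (fun v => Real.log (((P n).rnDeriv (G n) v).toReal)) (P n))
    (hsumH : Summable fun n : ℕ =>
      ∫ v, Real.log (((P n).rnDeriv (G n) v).toReal) ∂(P n))
    (hH : H = ∑' n : ℕ, ∫ v, Real.log (((P n).rnDeriv (G n) v).toReal) ∂(P n)) :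
    (∑' n : ℕ, ENNReal.ofReal (Real.log (n.factorial : ℝ)) * P n Set.univ)
      ≤ ENNReal.ofReal (H + Real.log 2
          + (ρ Set.univ).toReal * Real.log (ρ Set.univ).toReal) := by
  classical
  have hPfin : ∀ n, IsFiniteMeasure (P n) := hP.1
  set m := (ρ Set.univ).toReal with hm
  have hm0 : 0 ≤ m := ENNReal.toReal_nonneg
  set p : ℕ → ℝ := fun n => (P n Set.univ).toReal with hpdef
  set I : ℕ → ℝ := fun n => ∫ v, Real.log (((P n).rnDeriv (G n) v).toReal) ∂(P n) with hIdef
  have hp0 : ∀ n, 0 ≤ p n := fun n => ENNReal.toReal_nonneg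
  have hPne : ∀ n, P n Set.univ ≠ ⊤ := fun n => by
    haveI := hPfin n; exact measure_ne_top _ _
  have hρne : ρ Set.univ ≠ ⊤ := measure_ne_top ρ _
  -- sum p = 1
  have hsum1 : Summable p := ENNReal.summable_toReal (by rw [hP.2.1]; exact one_ne_top)
  have htsum1 : ∑' n, p n = 1 := by
    have h := ENNReal.tsum_toReal_eq hPne
    rw [hP.2.1] at h
    simpa [hpdef] using h.symm
  -- density sums
  have hρs := hP.2.2.2 Set.univ MeasurableSet.univ
  simp only [Set.mem_univ, Set.setOf_true] at hρs
  have hterm_ne : ∀ n : ℕ, ((n : ℝ≥0∞) + 1) * P (n + 1) Set.univ ≠ ⊤ :=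
    fun n => ENNReal.mul_ne_top (by simp) (hPne _)
  have hsumf : Summable (fun n : ℕ => ((n : ℝ) + 1) * p (n + 1)) := by
    have h := ENNReal.summable_toReal (f := fun n : ℕ => ((n : ℝ≥0∞) + 1) * P (n + 1) Set.univ)
      (by rw [hρs]; exact hρne)
    have he : (fun n : ℕ => (((n : ℝ≥0∞) + 1) * P (n + 1) Set.univ).toReal)
        = fun n : ℕ => ((n : ℝ) + 1) * p (n + 1) := by
      funext n
      rw [ENNReal.toReal_mul]
      congr 1
    rwa [he] at h
  have htsumf : ∑' n : ℕ, ((n : ℝ) + 1) * p (n + 1) = m := by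
    have h := ENNReal.tsum_toReal_eq hterm_ne
    rw [hρs] at h
    rw [hm, h]
    apply tsum_congr
    intro n
    rw [ENNReal.toReal_mul]
    congr 1
  have hsums : Summable (fun n : ℕ => (n : ℝ) * p n) := by
    apply (summable_nat_add_iff 1).mp
    have he : (fun n : ℕ => ((n + 1 : ℕ) : ℝ) * p (n + 1))
        = fun n : ℕ => ((n : ℝ) + 1) * p (n + 1) := by
      funext n; push_cast; ring
    rw [he]
    exact hsumf
  have htsums : ∑' n : ℕ, (n : ℝ) * p n = m := by
    rw [hsums.tsum_eq_zero_add]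
    simp only [Nat.cast_zero, zero_mul, zero_add]
    rw [← htsumf]
    congr 1
    funext n; push_cast; ring
  -- G facts
  have hGuniv : ∀ n : ℕ, G n Set.univ
      = ENNReal.ofReal (Real.exp (-m) / n.factorial) * (ρ Set.univ) ^ n := fun n => by
    rw [hG n]
    simp [Measure.smul_apply, Measure.pi_univ, smul_eq_mul]
  have hGne_top : ∀ n, G n Set.univ ≠ ⊤ := fun n => by
    rw [hGuniv n]
    exact ENNReal.mul_ne_top ENNReal.ofReal_ne_top (ENNReal.pow_ne_top hρne)
  have hGfin : ∀ n, IsFiniteMeasure (G n) := fun n =>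
    ⟨lt_of_le_of_ne le_top (hGne_top n)⟩
  have hgtoReal : ∀ n : ℕ, (G n Set.univ).toReal = Real.exp (-m) / n.factorial * m ^ n := by
    intro n
    rw [hGuniv n, ENNReal.toReal_mul, ENNReal.toReal_ofReal (by positivity), ENNReal.toReal_pow]
  -- key termwise inequality
  have key : ∀ n : ℕ, Real.log n.factorial * p n
      ≤ I n + ((n : ℝ) + 1) * p n * Real.log 2 + (1/2 : ℝ) ^ (n + 1)
        + (n : ℝ) * p n * Real.log m - p n - m * p n := by
    intro n
    haveI := hPfin n
    haveI := hGfin n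
    rcases eq_or_lt_of_le (hp0 n) with hpz | hppos
    · -- p n = 0
      have hP0 : P n = 0 := by
        apply Measure.measure_univ_eq_zero.mp
        have := (ENNReal.toReal_eq_zero_iff _).mp hpz.symm
        tauto
      have hI0 : I n = 0 := by simp [hIdef, hP0]
      have hq : (0:ℝ) ≤ (1/2 : ℝ) ^ (n + 1) := by positivity
      rw [← hpz, hI0]
      simp only [mul_zero, zero_mul, add_zero, zero_add, sub_zero]
      positivity
    · -- p n > 0
      have hGne0 : G n Set.univ ≠ 0 := by
        intro h
        have h2 : P n Set.univ = 0 := hPG n h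
        rw [hpdef] at hppos
        simp only [h2, ENNReal.toReal_zero] at hppos
        exact lt_irrefl 0 hppos
      have hgpos : 0 < (G n Set.univ).toReal := ENNReal.toReal_pos hGne0 (hGne_top n)
      have hmn : n = 0 ∨ 0 < m := by
        rcases Nat.eq_zero_or_pos n with h | h
        · exact Or.inl h
        · right
          rcases eq_or_lt_of_le hm0 with h0 | h0
          · exfalso
            rw [hgtoReal n, ← h0, zero_pow (Nat.pos_iff_ne_zero.mp h), mul_zero] at hgpos
            exact lt_irrefl 0 hgpos
          · exact h0
      have hlogg : Real.log ((G n Set.univ).toReal)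
          = -m - Real.log n.factorial + n * Real.log m := by
        rw [hgtoReal n]
        have hfacpos : (0:ℝ) < n.factorial := by exact_mod_cast n.factorial_pos
        rcases hmn with h | h
        · subst h; simp [Real.log_exp]
        · have e1 : Real.log (Real.exp (-m) / n.factorial) = -m - Real.log n.factorial := by
            rw [Real.log_div (Real.exp_ne_zero _) hfacpos.ne', Real.log_exp]
          rw [Real.log_mul (by positivity) (pow_ne_zero _ h.ne'), e1, Real.log_pow]
      have hdp := dp_aux (P n) (G n) (hPG n) hppos.ne' hgpos.ne' (hint n)
      rw [Real.log_div hppos.ne' hgpos.ne'] at hdp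
      have hdp' : p n * Real.log (p n)
          - p n * (-m - Real.log n.factorial + (n : ℝ) * Real.log m) ≤ I n := by
        rw [← mul_sub, ← hlogg]
        exact hdp
      have hq : (0:ℝ) < (1/2 : ℝ) ^ (n + 1) := by positivity
      have hgibbs : Real.log ((1/2 : ℝ) ^ (n + 1) / p n) ≤ (1/2 : ℝ) ^ (n + 1) / p n - 1 :=
        Real.log_le_sub_one_of_pos (div_pos hq hppos)
      rw [Real.log_div hq.ne' hppos.ne'] at hgibbs
      have hlogq : Real.log ((1/2 : ℝ) ^ (n + 1)) = -(((n : ℝ) + 1) * Real.log 2) := by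
        rw [Real.log_pow]
        push_cast
        rw [one_div, Real.log_inv]
        ring
      rw [hlogq] at hgibbs
      have he : p n * ((1/2 : ℝ) ^ (n + 1) / p n - 1) = (1/2 : ℝ) ^ (n + 1) - p n := by
        field_simp
      have hgibbs' : p n * (-(((n : ℝ) + 1) * Real.log 2) - Real.log (p n))
          ≤ (1/2 : ℝ) ^ (n + 1) - p n := by
        calc p n * (-(((n : ℝ) + 1) * Real.log 2) - Real.log (p n))
            ≤ p n * ((1/2 : ℝ) ^ (n + 1) / p n - 1) :=
              mul_le_mul_of_nonneg_left hgibbs (hp0 n)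
          _ = _ := he
      nlinarith [hdp', hgibbs']
  -- summability pieces
  have hsum2 : Summable (fun n : ℕ => ((n : ℝ) + 1) * p n) := by
    have := hsums.add hsum1
    have he : (fun n : ℕ => ((n : ℝ) + 1) * p n)
        = fun n : ℕ => (n : ℝ) * p n + p n := by funext n; ring
    rwa [he]
  have htsum2 : ∑' n : ℕ, ((n : ℝ) + 1) * p n = m + 1 := by
    have he : (fun n : ℕ => ((n : ℝ) + 1) * p n)
        = fun n : ℕ => (n : ℝ) * p n + p n := by funext n; ring
    rw [he, Summable.tsum_add hsums hsum1, htsums, htsum1]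
  have hsumq : Summable (fun n : ℕ => (1/2 : ℝ) ^ (n + 1)) := by
    have he : (fun n : ℕ => (1/2 : ℝ) ^ (n + 1)) = fun n : ℕ => (1/2 : ℝ) * (1/2 : ℝ) ^ n := by
      funext n; rw [pow_succ]; ring
    rw [he]
    exact (summable_geometric_of_lt_one (by norm_num) (by norm_num)).mul_left _
  have htsumq : ∑' n : ℕ, (1/2 : ℝ) ^ (n + 1) = 1 := by
    have he : (fun n : ℕ => (1/2 : ℝ) ^ (n + 1)) = fun n : ℕ => (1/2 : ℝ) * (1/2 : ℝ) ^ n := by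
      funext n; rw [pow_succ]; ring
    rw [he, tsum_mul_left, tsum_geometric_of_lt_one (by norm_num) (by norm_num)]
    norm_num
  set b : ℕ → ℝ := fun n => I n + ((n : ℝ) + 1) * p n * Real.log 2 + (1/2 : ℝ) ^ (n + 1)
        + (n : ℝ) * p n * Real.log m - p n - m * p n with hbdef
  have S1 : Summable I := hsumH
  have S2 : Summable (fun n : ℕ => ((n : ℝ) + 1) * p n * Real.log 2) := hsum2.mul_right _
  have S4 : Summable (fun n : ℕ => (n : ℝ) * p n * Real.log m) := hsums.mul_right _
  have S6 : Summable (fun n : ℕ => m * p n) := hsum1.mul_left _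
  have Sb : Summable b :=
    ((((S1.add S2).add hsumq).add S4).sub hsum1).sub S6
  have htsum_b : ∑' n, b n = H + (m + 1) * Real.log 2 + 1 + m * Real.log m - 1 - m := by
    rw [hbdef]
    rw [Summable.tsum_sub ((((S1.add S2).add hsumq).add S4).sub hsum1) S6,
      Summable.tsum_sub (((S1.add S2).add hsumq).add S4) hsum1,
      Summable.tsum_add ((S1.add S2).add hsumq) S4,
      Summable.tsum_add (S1.add S2) hsumq,
      Summable.tsum_add S1 S2,
      tsum_mul_right, tsum_mul_right, tsum_mul_left,
      htsum2, htsumq, htsums, htsum1, ← hH]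
    ring
  -- assemble
  have ha0 : ∀ n : ℕ, 0 ≤ Real.log n.factorial * p n := fun n =>
    mul_nonneg (Real.log_nonneg (by exact_mod_cast n.factorial_pos)) (hp0 n)
  have hsuma : Summable (fun n : ℕ => Real.log n.factorial * p n) :=
    Summable.of_nonneg_of_le ha0 key Sb
  have htsuma : ∑' n, Real.log n.factorial * p n ≤ ∑' n, b n := Summable.tsum_le_tsum key hsuma Sb
  have hlog2 : Real.log 2 ≤ 1 := by
    have := Real.log_le_sub_one_of_pos (by norm_num : (0:ℝ) < 2)
    linarith
  calc ∑' n : ℕ, ENNReal.ofReal (Real.log (n.factorial : ℝ)) * P n Set.univ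
      = ∑' n : ℕ, ENNReal.ofReal (Real.log n.factorial * p n) := by
        congr 1
        funext n
        rw [← ENNReal.ofReal_toReal (hPne n),
          ← ENNReal.ofReal_mul (Real.log_nonneg (by exact_mod_cast n.factorial_pos))]
    _ = ENNReal.ofReal (∑' n, Real.log n.factorial * p n) :=
        (ENNReal.ofReal_tsum_of_nonneg ha0 hsuma).symm
    _ ≤ ENNReal.ofReal (H + Real.log 2 + m * Real.log m) := by
        apply ENNReal.ofReal_le_ofReal
        rw [htsum_b] at htsuma
        nlinarith [hm0, hlog2, htsuma]
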